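/- arXiv:1901.03059 — 4 statements merged into one kernel-verified Lean document; each statement's English description precedes it below -/
import Mathlib

section
/- Let P be a d × n matrix of indeterminates over a field K, partitioned columnwise into blocks C_1, …, C_ℓ with pairwise disjoint column sets. The ideal generated by a set of variables p_{i,j} (for j in a fixed set S of column indices) together with all 2-minors of the submatrices P_{C_j \ S} is a prime ideal of K[P]. -/
open MvPolynomial

namespace IdealIS

variable {d n ℓ : ℕ}

/-- block classification of a column -/
noncomputable def blk (C : Fin ℓ → Finset (Fin n)) (j : Fin n) : Option (Fin ℓ) :=
  if h : ∃ b, j ∈ C b then some h.choose else none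

lemma blk_mem {C : Fin ℓ → Finset (Fin n)} {j : Fin n} {b : Fin ℓ}
    (h : blk C j = some b) : j ∈ C b := by
  unfold blk at h
  split_ifs at h with h'
  obtain rfl := Option.some.inj h
  exact h'.choose_spec

lemma blk_eq {C : Fin ℓ → Finset (Fin n)}
    (hdisj : ∀ j j', j ≠ j' → Disjoint (C j) (C j')) {j : Fin n} {b : Fin ℓ}
    (hj : j ∈ C b) : blk C j = some b := by
  unfold blk
  rw [dif_pos ⟨b, hj⟩]
  congr 1
  by_contra hne
  exact Finset.disjoint_left.mp (hdisj _ _ hne) (⟨b, hj⟩ : ∃ b, j ∈ C b).choose_spec hj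

/-- target variable type -/
abbrev V (d n ℓ : ℕ) : Type := (Fin ℓ × Fin d) ⊕ (Fin n ⊕ (Fin d × Fin n))

/-- exponent vector of the image of a source variable -/
noncomputable def τ (C : Fin ℓ → Finset (Fin n)) (v : Fin d × Fin n) : V d n ℓ →₀ ℕ :=
  (blk C v.2).elim (Finsupp.single (Sum.inr (Sum.inr v)) 1)
    (fun b => Finsupp.single (Sum.inl (b, v.1)) 1 + Finsupp.single (Sum.inr (Sum.inl v.2)) 1)

/-- image exponent vector of a monomial -/
noncomputable def σm (C : Fin ℓ → Finset (Fin n)) (m : (Fin d × Fin n) →₀ ℕ) : V d n ℓ →₀ ℕ :=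
  m.sum fun v e => e • τ C v

lemma σm_add (C : Fin ℓ → Finset (Fin n)) (m m' : (Fin d × Fin n) →₀ ℕ) :
    σm C (m + m') = σm C m + σm C m' :=
  Finsupp.sum_add_index' (fun _ => zero_smul ℕ _) (fun _ b₁ b₂ => add_smul b₁ b₂ _)

lemma σm_single (C : Fin ℓ → Finset (Fin n)) (v : Fin d × Fin n) :
    σm C (Finsupp.single v 1) = τ C v := by
  rw [σm]
  rw [Finsupp.sum_single_index]
  · rw [one_smul]
  · rw [zero_smul]

lemma σm_apply (C : Fin ℓ → Finset (Fin n)) (m : (Fin d × Fin n) →₀ ℕ) (x : V d n ℓ) :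
    σm C m x = ∑ v : Fin d × Fin n, m v * τ C v x := by
  rw [σm, Finsupp.sum_apply, Finsupp.sum]
  rw [Finset.sum_subset (Finset.subset_univ _)]
  · exact Finset.sum_congr rfl fun v _ => by simp
  · intro v _ hv
    simp [Finsupp.notMem_support_iff.mp hv]

-- coordinate computations
lemma σm_free {C : Fin ℓ → Finset (Fin n)} {j : Fin n} (hj : blk C j = none)
    (m : (Fin d × Fin n) →₀ ℕ) (i : Fin d) :
    σm C m (Sum.inr (Sum.inr (i, j))) = m (i, j) := by
  rw [σm_apply]
  rw [Finset.sum_eq_single (i, j)]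
  · rw [τ]
    rcases v2 : blk C j with _ | b
    · simp [Finsupp.single_apply]
    · exact absurd (hj ▸ v2) (by simp)
  · intro v _ hv
    rw [τ]
    rcases v2 : blk C v.2 with _ | b
    · simp only [Option.elim, Finsupp.single_apply]
      rw [if_neg (by simpa using hv), mul_zero]
    · simp [Finsupp.single_apply]
  · intro h; exact absurd (Finset.mem_univ _) h

lemma σm_col {C : Fin ℓ → Finset (Fin n)} {j : Fin n} {b : Fin ℓ} (hj : blk C j = some b)
    (m : (Fin d × Fin n) →₀ ℕ) :
    σm C m (Sum.inr (Sum.inl j)) = ∑ i : Fin d, m (i, j) := by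
  rw [σm_apply, Fintype.sum_prod_type]
  refine Finset.sum_congr rfl fun i _ => ?_
  rw [Finset.sum_eq_single j]
  · rw [τ]; rw [show ((i,j) : Fin d × Fin n).2 = j from rfl, hj]
    simp [Finsupp.single_apply]
  · intro c _ hc
    rw [τ]
    rcases v2 : blk C c with _ | b'
    · simp [Finsupp.single_apply]
    · simp [Finsupp.single_apply, hc]
  · intro h; exact absurd (Finset.mem_univ _) h

lemma σm_row (C : Fin ℓ → Finset (Fin n)) (b : Fin ℓ) (i : Fin d)
    (m : (Fin d × Fin n) →₀ ℕ) :
    σm C m (Sum.inl (b, i)) = ∑ j : Fin n, (if blk C j = some b then m (i, j) else 0) := by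
  rw [σm_apply, Fintype.sum_prod_type, Finset.sum_comm]
  refine Finset.sum_congr rfl fun j _ => ?_
  rcases v2 : blk C j with _ | b'
  · rw [if_neg (by simp [v2])]
    refine Finset.sum_eq_zero fun i' _ => ?_
    rw [τ]; rw [show ((i',j) : Fin d × Fin n).2 = j from rfl, v2]
    simp
  · by_cases hb : b' = b
    · subst hb
      rw [if_pos (rfl : (some b' : Option (Fin ℓ)) = some b'), Finset.sum_eq_single i]
      · rw [τ, show ((i,j) : Fin d × Fin n).2 = j from rfl, v2]
        simp [Finsupp.single_apply]
      · intro i' _ hi'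
        rw [τ, show ((i',j) : Fin d × Fin n).2 = j from rfl, v2]
        simp [Finsupp.single_apply, hi']
      · intro h; exact absurd (Finset.mem_univ _) h
    · rw [if_neg (fun h => hb (Option.some.inj h))]
      refine Finset.sum_eq_zero fun i' _ => ?_
      rw [τ, show ((i',j) : Fin d × Fin n).2 = j from rfl, v2]
      simp [Finsupp.single_apply, hb]

lemma τ_swap {C : Fin ℓ → Finset (Fin n)} {c₁ c₂ : Fin n} {b : Fin ℓ}
    (h1 : blk C c₁ = some b) (h2 : blk C c₂ = some b) (i₁ i₂ : Fin d) :
    τ C (i₁, c₁) + τ C (i₂, c₂) = τ C (i₁, c₂) + τ C (i₂, c₁) := by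
  rw [τ, τ, τ, τ]
  rw [show ((i₁,c₁) : Fin d × Fin n).2 = c₁ from rfl, show ((i₂,c₂) : Fin d × Fin n).2 = c₂ from rfl, h1, h2]
  simp only [Option.elim]
  abel




variable (K : Type) [Field K]

/-- the substitution sending each variable to a monomial (or zero) -/
noncomputable def gmap (C : Fin ℓ → Finset (Fin n)) (S : Finset (Fin n))
    (v : Fin d × Fin n) : MvPolynomial (V d n ℓ) K :=
  if v.2 ∈ S then 0 else monomial (τ C v) 1

/-- the ideal of the theorem -/
noncomputable def IS (C : Fin ℓ → Finset (Fin n)) (S : Finset (Fin n)) :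
    Ideal (MvPolynomial (Fin d × Fin n) K) :=
  Ideal.span
    ({f : MvPolynomial (Fin d × Fin n) K | ∃ (i : Fin d) (j : Fin n), j ∈ S ∧ f = X (i, j)}
      ∪ {f : MvPolynomial (Fin d × Fin n) K |
          ∃ (j : Fin ℓ) (i₁ i₂ : Fin d) (c₁ c₂ : Fin n),
            i₁ ≠ i₂ ∧ c₁ ≠ c₂ ∧ c₁ ∈ C j \ S ∧ c₂ ∈ C j \ S ∧
            f = X (i₁, c₁) * X (i₂, c₂) - X (i₁, c₂) * X (i₂, c₁)})

lemma prod_monomial {α : Type*} (s : Finset α) (t : α → (V d n ℓ →₀ ℕ)) :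
    monomial (∑ x ∈ s, t x) (1 : K) = ∏ x ∈ s, monomial (t x) 1 := by
  induction s using Finset.cons_induction with
  | empty => simp
  | cons a s ha ih => rw [Finset.sum_cons, Finset.prod_cons, ← ih, monomial_mul, one_mul]

/-- avoiding the columns of S -/
def Avoid (S : Finset (Fin n)) (m : (Fin d × Fin n) →₀ ℕ) : Prop :=
  ∀ v : Fin d × Fin n, v.2 ∈ S → m v = 0

lemma phi_monomial {C : Fin ℓ → Finset (Fin n)} {S : Finset (Fin n)}
    {m : (Fin d × Fin n) →₀ ℕ} (hm : Avoid S m) (c : K) :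
    aeval (gmap K C S) (monomial m c) = monomial (σm C m) c := by
  rw [aeval_monomial]
  have h1 : m.prod (fun v e => gmap K C S v ^ e) = monomial (σm C m) 1 := by
    rw [Finsupp.prod, show σm C m = ∑ v ∈ m.support, m v • τ C v from rfl, prod_monomial]
    refine Finset.prod_congr rfl fun v hv => ?_
    have hvS : v.2 ∉ S := fun h => Finsupp.mem_support_iff.mp hv (hm v h)
    rw [gmap, if_neg hvS, monomial_pow, one_pow]
  rw [h1, algebraMap_eq, C_mul_monomial, mul_one]

lemma phi_monomial_S {C : Fin ℓ → Finset (Fin n)} {S : Finset (Fin n)}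
    {m : (Fin d × Fin n) →₀ ℕ} (hm : ¬ Avoid S m) (c : K) :
    aeval (gmap K C S) (monomial m c) = 0 := by
  rw [aeval_monomial]
  obtain ⟨v, hvS, hv⟩ : ∃ v : Fin d × Fin n, v.2 ∈ S ∧ m v ≠ 0 := by
    by_contra h; push_neg at h
    exact hm h
  have : m.prod (fun v e => gmap K C S v ^ e) = 0 := by
    rw [Finsupp.prod]
    refine Finset.prod_eq_zero (Finsupp.mem_support_iff.mpr hv) ?_
    rw [gmap, if_pos hvS, zero_pow hv]
  rw [this, mul_zero]

lemma var_mem {C : Fin ℓ → Finset (Fin n)} {S : Finset (Fin n)} {i : Fin d} {j : Fin n}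
    (hj : j ∈ S) : X (i, j) ∈ IS K C S :=
  Ideal.subset_span (Or.inl ⟨i, j, hj, rfl⟩)

lemma minor_mem {C : Fin ℓ → Finset (Fin n)} {S : Finset (Fin n)} {b : Fin ℓ}
    {i₁ i₂ : Fin d} {c₁ c₂ : Fin n} (hi : i₁ ≠ i₂) (hc : c₁ ≠ c₂)
    (h1 : c₁ ∈ C b) (h1' : c₁ ∉ S) (h2 : c₂ ∈ C b) (h2' : c₂ ∉ S) :
    X (i₁, c₁) * X (i₂, c₂) - X (i₁, c₂) * X (i₂, c₁) ∈ IS K C S :=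
  Ideal.subset_span (Or.inr ⟨b, i₁, i₂, c₁, c₂, hi, hc,
    Finset.mem_sdiff.mpr ⟨h1, h1'⟩, Finset.mem_sdiff.mpr ⟨h2, h2'⟩, rfl⟩)

lemma monomial_S_mem {C : Fin ℓ → Finset (Fin n)} {S : Finset (Fin n)}
    {m : (Fin d × Fin n) →₀ ℕ} (hm : ¬ Avoid S m) (c : K) :
    monomial m c ∈ IS K C S := by
  obtain ⟨v, hvS, hv⟩ : ∃ v : Fin d × Fin n, v.2 ∈ S ∧ m v ≠ 0 := by
    by_contra h; push_neg at h
    exact hm h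
  have hdecomp : m = Finsupp.single v 1 + (m - Finsupp.single v 1) := by
    ext x
    by_cases hx : v = x
    · subst hx
      simp only [Finsupp.add_apply, Finsupp.tsub_apply, Finsupp.single_eq_same]
      omega
    · simp only [Finsupp.add_apply, Finsupp.tsub_apply, Finsupp.single_eq_of_ne' hx]
      omega
  have : monomial m c = X v * monomial (m - Finsupp.single v 1) c := by
    rw [show (X v : MvPolynomial (Fin d × Fin n) K) = monomial (Finsupp.single v 1) 1 from rfl,
      monomial_mul, one_mul, ← hdecomp]
  rw [this]
  exact Ideal.mul_mem_right _ _ (var_mem K hvS)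


lemma exists_lt_of_sum_eq {α : Type*} [Fintype α] {f g : α → ℕ}
    (h : ∑ x, f x = ∑ x, g x) {a : α} (ha : g a < f a) : ∃ b, f b < g b := by
  by_contra hc
  push_neg at hc
  have := Finset.sum_lt_sum (fun i (_ : i ∈ Finset.univ) => hc i)
    ⟨a, Finset.mem_univ a, ha⟩
  omega

def dist (m m' : (Fin d × Fin n) →₀ ℕ) : ℕ :=
  ∑ v : Fin d × Fin n, ((m v - m' v) + (m' v - m v))

lemma dist_comm (m m' : (Fin d × Fin n) →₀ ℕ) : dist m m' = dist m' m :=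
  Finset.sum_congr rfl fun v _ => by omega

lemma dist_eq_zero {m m' : (Fin d × Fin n) →₀ ℕ} (h : dist m m' = 0) : m = m' := by
  ext v
  have := (Finset.sum_eq_zero_iff).mp h v (Finset.mem_univ v)
  omega

lemma sum_lt_four {α : Type*} [Fintype α] [DecidableEq α] {f g : α → ℕ} {v1 v2 v3 v4 : α}
    (h12 : v1 ≠ v2) (h13 : v1 ≠ v3) (h14 : v1 ≠ v4) (h23 : v2 ≠ v3) (h24 : v2 ≠ v4)
    (h34 : v3 ≠ v4)
    (hother : ∀ x, x ≠ v1 → x ≠ v2 → x ≠ v3 → x ≠ v4 → f x = g x)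
    (hlt : f v1 + f v2 + f v3 + f v4 < g v1 + g v2 + g v3 + g v4) :
    ∑ x, f x < ∑ x, g x := by
  have hsub : ({v1, v2, v3, v4} : Finset α) ⊆ Finset.univ := Finset.subset_univ _
  rw [← Finset.sum_sdiff hsub (f := f), ← Finset.sum_sdiff hsub (f := g)]
  have hsame : ∑ x ∈ Finset.univ \ {v1,v2,v3,v4}, f x
      = ∑ x ∈ Finset.univ \ {v1,v2,v3,v4}, g x := by
    refine Finset.sum_congr rfl fun x hx => ?_
    simp only [Finset.mem_sdiff, Finset.mem_insert, Finset.mem_singleton] at hx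
    push_neg at hx
    exact hother x hx.2.1 hx.2.2.1 hx.2.2.2.1 hx.2.2.2.2
  have hs : ∀ h : α → ℕ, ∑ x ∈ ({v1,v2,v3,v4} : Finset α), h x
      = h v1 + h v2 + h v3 + h v4 := by
    intro h
    rw [show ({v1,v2,v3,v4} : Finset α) = insert v1 (insert v2 (insert v3 {v4})) from rfl]
    rw [Finset.sum_insert (by simp [h12, h13, h14]), Finset.sum_insert (by simp [h23, h24]),
        Finset.sum_insert (by simp [h34]), Finset.sum_singleton]
    omega
  rw [hs f, hs g]
  omega

lemma step {C : Fin ℓ → Finset (Fin n)} {S : Finset (Fin n)}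
    {m m' : (Fin d × Fin n) →₀ ℕ} (hm : Avoid S m) (hm' : Avoid S m')
    (hσ : σm C m = σm C m') {v : Fin d × Fin n} (hv : m' v < m v) :
    ∃ m₂, Avoid S m₂ ∧ σm C m₂ = σm C m ∧
      monomial m (1:K) - monomial m₂ 1 ∈ IS K C S ∧ dist m₂ m' < dist m m' := by
  classical
  obtain ⟨i1, c1⟩ := v
  have hc1S : c1 ∉ S := fun h => by have := hm (i1, c1) h; omega
  rcases hb : blk C c1 with _ | b
  · exfalso
    have h1 := σm_free hb m i1
    have h2 := σm_free hb m' i1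
    rw [hσ] at h1
    omega
  have hrow : ∑ j : Fin n, (if blk C j = some b then m (i1, j) else 0)
      = ∑ j : Fin n, (if blk C j = some b then m' (i1, j) else 0) := by
    rw [← σm_row, ← σm_row, hσ]
  obtain ⟨c2, hc2⟩ := exists_lt_of_sum_eq hrow (a := c1)
    (by rw [if_pos hb, if_pos hb]; exact hv)
  have hb2 : blk C c2 = some b := by
    by_contra h; rw [if_neg h, if_neg h] at hc2; omega
  rw [if_pos hb2, if_pos hb2] at hc2
  have hc2S : c2 ∉ S := fun h => by have := hm' (i1, c2) h; omega
  have hcc : c1 ≠ c2 := fun h => by rw [h] at hv; omega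
  have hcol : ∑ i : Fin d, m' (i, c2) = ∑ i : Fin d, m (i, c2) := by
    rw [← σm_col hb2, ← σm_col hb2, hσ]
  obtain ⟨i2, hi2⟩ := exists_lt_of_sum_eq hcol (a := i1) hc2
  have hii : i1 ≠ i2 := fun h => by rw [← h] at hi2; omega
  set v1 : Fin d × Fin n := (i1, c1) with hv1
  set v2 : Fin d × Fin n := (i1, c2) with hv2
  set v3 : Fin d × Fin n := (i2, c1) with hv3
  set v4 : Fin d × Fin n := (i2, c2) with hv4
  have hne12 : v1 ≠ v2 := fun h => hcc (congrArg Prod.snd h)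
  have hne13 : v1 ≠ v3 := fun h => hii (congrArg Prod.fst h)
  have hne14 : v1 ≠ v4 := fun h => hii (congrArg Prod.fst h)
  have hne23 : v2 ≠ v3 := fun h => hii (congrArg Prod.fst h)
  have hne24 : v2 ≠ v4 := fun h => hii (congrArg Prod.fst h)
  have hne34 : v3 ≠ v4 := fun h => hcc (congrArg Prod.snd h)
  set base : (Fin d × Fin n) →₀ ℕ := m - Finsupp.single v1 1 - Finsupp.single v4 1 with hbase
  have hkey : m = base + Finsupp.single v1 1 + Finsupp.single v4 1 := by
    ext x
    simp only [hbase, Finsupp.add_apply, Finsupp.tsub_apply, Finsupp.single_apply]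
    by_cases e1 : v1 = x
    · subst e1
      rw [if_pos rfl, if_neg (Ne.symm hne14)]
      have h1 : m' v1 < m v1 := hv
      omega
    · by_cases e4 : v4 = x
      · subst e4
        rw [if_neg hne14, if_pos rfl]
        have h4 : m' v4 < m v4 := hi2
        omega
      · rw [if_neg e1, if_neg e4]
        omega
  set m₂ : (Fin d × Fin n) →₀ ℕ := base + Finsupp.single v2 1 + Finsupp.single v3 1 with hm₂
  have hval : ∀ x, m₂ x + (if v1 = x then 1 else 0) + (if v4 = x then 1 else 0)
      = m x + (if v2 = x then 1 else 0) + (if v3 = x then 1 else 0) := by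
    intro x
    have h1 := DFunLike.congr_fun hkey x
    rw [hm₂]
    simp only [Finsupp.add_apply, Finsupp.single_apply] at h1 ⊢
    split_ifs at h1 ⊢ <;> omega
  have hAvoid : Avoid S m₂ := by
    intro x hx
    have hx1 : ¬ (v1 = x) := fun e => hc1S (by cases e; exact hx)
    have hx2 : ¬ (v2 = x) := fun e => hc2S (by cases e; exact hx)
    have hx3 : ¬ (v3 = x) := fun e => hc1S (by cases e; exact hx)
    have hx4 : ¬ (v4 = x) := fun e => hc2S (by cases e; exact hx)
    have h := hval x
    rw [if_neg hx1, if_neg hx4, if_neg hx2, if_neg hx3] at h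
    have := hm x hx
    omega
  have hσ₂ : σm C m₂ = σm C m := by
    rw [hm₂, hkey, σm_add, σm_add, σm_add, σm_add, σm_single, σm_single, σm_single, σm_single]
    have := τ_swap hb hb2 i1 i2
    rw [add_assoc, add_assoc, ← this]
  have hmem : monomial m (1:K) - monomial m₂ 1 ∈ IS K C S := by
    have hfac : monomial m (1:K) - monomial m₂ 1
        = monomial base 1 * (X v1 * X v4 - X v2 * X v3) := by
      rw [hkey, hm₂]
      rw [show (X v1 : MvPolynomial (Fin d × Fin n) K) = monomial (Finsupp.single v1 1) 1 from rfl,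
          show (X v4 : MvPolynomial (Fin d × Fin n) K) = monomial (Finsupp.single v4 1) 1 from rfl,
          show (X v2 : MvPolynomial (Fin d × Fin n) K) = monomial (Finsupp.single v2 1) 1 from rfl,
          show (X v3 : MvPolynomial (Fin d × Fin n) K) = monomial (Finsupp.single v3 1) 1 from rfl]
      simp only [mul_sub, monomial_mul, mul_one, one_mul, add_assoc]
    rw [hfac]
    exact Ideal.mul_mem_left _ _
      (minor_mem K hii hcc (blk_mem hb) hc1S (blk_mem hb2) hc2S)
  refine ⟨m₂, hAvoid, hσ₂, hmem, ?_⟩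
  have e1 : m₂ v1 + 1 = m v1 := by
    have h := hval v1
    rw [if_pos rfl, if_neg (Ne.symm hne14), if_neg (Ne.symm hne12), if_neg (Ne.symm hne13)] at h
    omega
  have e2 : m₂ v2 = m v2 + 1 := by
    have h := hval v2
    rw [if_neg hne12, if_neg (Ne.symm hne24), if_pos rfl, if_neg (Ne.symm hne23)] at h
    omega
  have e3 : m₂ v3 = m v3 + 1 := by
    have h := hval v3
    rw [if_neg hne13, if_neg (Ne.symm hne34), if_neg hne23, if_pos rfl] at h
    omega
  have e4 : m₂ v4 + 1 = m v4 := by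
    have h := hval v4
    rw [if_neg hne14, if_pos rfl, if_neg hne24, if_neg hne34] at h
    omega
  rw [dist, dist]
  refine sum_lt_four hne12 hne13 hne14 hne23 hne24 hne34 (fun x hx1 hx2 hx3 hx4 => ?_) ?_
  · have h := hval x
    rw [if_neg (Ne.symm hx1), if_neg (Ne.symm hx4), if_neg (Ne.symm hx2),
        if_neg (Ne.symm hx3)] at h
    omega
  · have d1 : m' v1 < m v1 := hv
    have d2 : m v2 < m' v2 := hc2
    have d4 : m' v4 < m v4 := hi2
    omega

lemma connect {C : Fin ℓ → Finset (Fin n)} {S : Finset (Fin n)} (N : ℕ) :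
    ∀ m m' : (Fin d × Fin n) →₀ ℕ, dist m m' ≤ N → Avoid S m → Avoid S m' →
      σm C m = σm C m' → monomial m (1:K) - monomial m' 1 ∈ IS K C S := by
  induction N with
  | zero =>
    intro m m' hd _ _ _
    rw [dist_eq_zero (Nat.le_zero.mp hd), sub_self]
    exact zero_mem _
  | succ N ih =>
    intro m m' hd hm hm' hσ
    by_cases he : m = m'
    · rw [he, sub_self]; exact zero_mem _
    obtain ⟨v, hvne⟩ : ∃ v, m v ≠ m' v := by
      by_contra h; push_neg at h; exact he (Finsupp.ext h)
    rcases Nat.lt_or_ge (m' v) (m v) with h | h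
    · obtain ⟨m₂, hA, hσ₂, hmem, hlt⟩ := step K hm hm' hσ h
      have h2 := ih m₂ m' (by omega) hA hm' (hσ₂.trans hσ)
      have h3 := Ideal.add_mem _ hmem h2
      rwa [sub_add_sub_cancel] at h3
    · have h' : m v < m' v := by omega
      obtain ⟨m₂, hA, hσ₂, hmem, hlt⟩ := step K hm' hm hσ.symm h'
      have hd2 : dist m₂ m ≤ N := by
        rw [dist_comm m m'] at hd; omega
      have h2 := ih m₂ m hd2 hA hm (hσ₂.trans hσ.symm)
      have h3 := Ideal.add_mem _ hmem h2
      rw [sub_add_sub_cancel] at h3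
      rw [show monomial m (1:K) - monomial m' 1 = -(monomial m' 1 - monomial m 1) by ring]
      exact neg_mem h3

lemma gmap_eq {C : Fin ℓ → Finset (Fin n)} {S : Finset (Fin n)} {i : Fin d} {j : Fin n}
    (hj : j ∉ S) : gmap K C S (i, j) = monomial (τ C (i, j)) 1 := if_neg hj

lemma gmap_S {C : Fin ℓ → Finset (Fin n)} {S : Finset (Fin n)} {i : Fin d} {j : Fin n}
    (hj : j ∈ S) : gmap K C S (i, j) = 0 := if_pos hj

lemma IS_le_ker {d : ℕ} {C : Fin ℓ → Finset (Fin n)} {S : Finset (Fin n)}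
    (hdisj : ∀ j j', j ≠ j' → Disjoint (C j) (C j')) :
    (IS K C S : Ideal (MvPolynomial (Fin d × Fin n) K))
      ≤ RingHom.ker (aeval (gmap K C S)).toRingHom := by
  rw [IS, Ideal.span_le]
  rintro f (⟨i, j, hj, rfl⟩ | ⟨b, i₁, i₂, c₁, c₂, hi, hc, h1, h2, rfl⟩)
  · rw [SetLike.mem_coe, RingHom.mem_ker]
    simp only [AlgHom.toRingHom_eq_coe, RingHom.coe_coe, aeval_X]
    exact gmap_S K hj
  · rw [SetLike.mem_coe, RingHom.mem_ker]
    obtain ⟨h1c, h1s⟩ := Finset.mem_sdiff.mp h1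
    obtain ⟨h2c, h2s⟩ := Finset.mem_sdiff.mp h2
    simp only [AlgHom.toRingHom_eq_coe, RingHom.coe_coe, map_sub, map_mul, aeval_X]
    rw [gmap_eq K h1s, gmap_eq K h2s, gmap_eq K h2s, gmap_eq K h1s,
        monomial_mul, monomial_mul, τ_swap (blk_eq hdisj h1c) (blk_eq hdisj h2c) i₁ i₂,
        sub_self]

lemma ker_le_IS {d : ℕ} {C : Fin ℓ → Finset (Fin n)} {S : Finset (Fin n)} :
    RingHom.ker (aeval (gmap K C S)).toRingHom
      ≤ (IS K C S : Ideal (MvPolynomial (Fin d × Fin n) K)) := by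
  classical
  intro f hf
  rw [RingHom.mem_ker] at hf
  have hf0 : aeval (gmap K C S) f = 0 := hf
  set t : Finset ((Fin d × Fin n) →₀ ℕ) := f.support.filter (fun m => Avoid S m) with ht
  set f' : MvPolynomial (Fin d × Fin n) K := ∑ m ∈ t, monomial m (coeff m f) with hf'
  have hrepr : ∑ m ∈ f.support, monomial m (coeff m f) = f := support_sum_monomial_coeff f
  have hsplit := Finset.sum_filter_add_sum_filter_not f.support (fun m => Avoid S m)
    (fun m => monomial m (coeff m f))
  have hbad : (∑ m ∈ f.support.filter (fun m => ¬ Avoid S m), monomial m (coeff m f))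
      ∈ IS K C S := by
    refine Ideal.sum_mem _ fun m hm => ?_
    exact monomial_S_mem K (Finset.mem_filter.mp hm).2 _
  have hbad0 : aeval (gmap K C S)
      (∑ m ∈ f.support.filter (fun m => ¬ Avoid S m), monomial m (coeff m f)) = 0 := by
    rw [map_sum]
    exact Finset.sum_eq_zero fun m hm => phi_monomial_S K (Finset.mem_filter.mp hm).2 _
  have hf'0 : aeval (gmap K C S) f' = 0 := by
    have h := congrArg (aeval (gmap K C S)) (hsplit.trans hrepr)
    rw [map_add, hbad0, add_zero, hf0] at h
    rw [hf']
    exact h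
  have hcoeff : ∀ y, ∑ m ∈ t.filter (fun m => σm C m = y), coeff m f = 0 := by
    intro y
    have h1 : aeval (gmap K C S) f' = ∑ m ∈ t, monomial (σm C m) (coeff m f) := by
      rw [hf', map_sum]
      exact Finset.sum_congr rfl fun m hm =>
        phi_monomial K (Finset.mem_filter.mp (ht ▸ hm)).2 _
    calc ∑ m ∈ t.filter (fun m => σm C m = y), coeff m f
        = ∑ m ∈ t, coeff y (monomial (σm C m) (coeff m f)) := by
          rw [Finset.sum_filter]
          exact Finset.sum_congr rfl fun m _ => (coeff_monomial y (σm C m) (coeff m f)).symm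
      _ = coeff y (∑ m ∈ t, monomial (σm C m) (coeff m f)) := by rw [coeff_sum]
      _ = coeff y (aeval (gmap K C S) f') := by rw [h1]
      _ = 0 := by rw [hf'0, coeff_zero]
  have hgood : f' ∈ IS K C S := by
    rw [← Ideal.Quotient.eq_zero_iff_mem]
    have hmaps : ∀ m ∈ t, σm C m ∈ t.image (σm C) := fun m hm =>
      Finset.mem_image_of_mem _ hm
    have hfib := Finset.sum_fiberwise_of_maps_to hmaps
      (fun m => Ideal.Quotient.mk (IS K C S) (monomial m (coeff m f)))
    rw [hf', map_sum, ← hfib]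
    refine Finset.sum_eq_zero fun y hy => ?_
    obtain ⟨m₀, hm₀t, hm₀y⟩ := Finset.mem_image.mp hy
    have hm₀A : Avoid S m₀ := (Finset.mem_filter.mp (ht ▸ hm₀t)).2
    have hrw : ∀ m ∈ t.filter (fun m => σm C m = y),
        Ideal.Quotient.mk (IS K C S) (monomial m (coeff m f))
          = Ideal.Quotient.mk (IS K C S) (MvPolynomial.C (coeff m f) * monomial m₀ 1) := by
      intro m hm
      obtain ⟨hmt, hmy⟩ := Finset.mem_filter.mp hm
      have hmA : Avoid S m := (Finset.mem_filter.mp (ht ▸ hmt)).2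
      have hconn := connect K (dist m m₀) m m₀ le_rfl hmA hm₀A (by rw [hmy, ← hm₀y])
      have he : monomial m (coeff m f) = MvPolynomial.C (coeff m f) * monomial m 1 := by
        rw [C_mul_monomial, mul_one]
      rw [he, map_mul, map_mul]
      congr 1
      exact (Ideal.Quotient.mk_eq_mk_iff_sub_mem _ _).mpr hconn
    rw [Finset.sum_congr rfl hrw]
    have : ∑ m ∈ t.filter (fun m => σm C m = y),
        Ideal.Quotient.mk (IS K C S) (MvPolynomial.C (coeff m f) * monomial m₀ 1)
        = Ideal.Quotient.mk (IS K C S)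
            ((∑ m ∈ t.filter (fun m => σm C m = y), MvPolynomial.C (coeff m f)) * monomial m₀ 1) := by
      rw [Finset.sum_mul, map_sum]
    rw [this, ← map_sum, hcoeff y, map_zero, zero_mul, map_zero]
  have hfeq : f = f' + ∑ m ∈ f.support.filter (fun m => ¬ Avoid S m),
      monomial m (coeff m f) := by
    rw [hf', ht, hsplit, hrepr]
  rw [hfeq]
  exact Ideal.add_mem _ hgood hbad

end IdealIS

/-- Let `P` be a `d × n` matrix of indeterminates over a field `K`, with pairwise disjoint
column blocks `C 0, …, C (ℓ-1)`, and let `S` be a set of columns.  The ideal generated by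
the variables `p i j` for `j ∈ S` together with all `2`-minors of the submatrices
`P_{C j \ S}` is prime. -/
theorem ideal_IS_isPrime (K : Type) [Field K] (d n ℓ : ℕ)
    (C : Fin ℓ → Finset (Fin n))
    (hdisj : ∀ j j', j ≠ j' → Disjoint (C j) (C j'))
    (S : Finset (Fin n)) :
    (Ideal.span
      ({f : MvPolynomial (Fin d × Fin n) K | ∃ (i : Fin d) (j : Fin n), j ∈ S ∧ f = X (i, j)}
        ∪ {f : MvPolynomial (Fin d × Fin n) K |
            ∃ (j : Fin ℓ) (i₁ i₂ : Fin d) (c₁ c₂ : Fin n),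
              i₁ ≠ i₂ ∧ c₁ ≠ c₂ ∧ c₁ ∈ C j \ S ∧ c₂ ∈ C j \ S ∧
              f = X (i₁, c₁) * X (i₂, c₂) - X (i₁, c₂) * X (i₂, c₁)})).IsPrime := by
  have heq : Ideal.span
      ({f : MvPolynomial (Fin d × Fin n) K | ∃ (i : Fin d) (j : Fin n), j ∈ S ∧ f = X (i, j)}
        ∪ {f : MvPolynomial (Fin d × Fin n) K |
            ∃ (j : Fin ℓ) (i₁ i₂ : Fin d) (c₁ c₂ : Fin n),
              i₁ ≠ i₂ ∧ c₁ ≠ c₂ ∧ c₁ ∈ C j \ S ∧ c₂ ∈ C j \ S ∧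
              f = X (i₁, c₁) * X (i₂, c₂) - X (i₁, c₂) * X (i₂, c₁)})
      = IdealIS.IS K C S := rfl
  rw [heq, le_antisymm (IdealIS.IS_le_ker K hdisj) (IdealIS.ker_le_IS K)]
  exact RingHom.ker_isPrime _
end

section
/- Let P be a d × kℓ matrix of indeterminates with columns organized into an k × ℓ grid 𝒴, with columns C_1,…,C_ℓ (the columns of the grid). The ideal I_0 generated by all 2-minors [A|B] with B ⊆ C_j for some j, together with all ℓ-minors of P, is minimally generated by: all such 2-minors, and those ℓ-minors [A|B] with |B ∩ C_j| ≤ 1 for every j. -/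
open MvPolynomial

/-- The minor `[A|B]` of the `d × n` matrix of indeterminates `(p_{i,j})`,
with rows `A` and columns `B` taken in increasing order. -/
noncomputable def paperMinor (K : Type) [Field K] (d n m : ℕ)
    (A : Finset (Fin d)) (B : Finset (Fin n)) (hA : A.card = m) (hB : B.card = m) :
    MvPolynomial (Fin d × Fin n) K :=
  (Matrix.of fun a b : Fin m =>
    (X (A.orderEmbOfFin hA a, B.orderEmbOfFin hB b) : MvPolynomial (Fin d × Fin n) K)).det

/-- The set of `2`-minors `[A|B]` with both columns of `B` in the same grid-column `C j`
(the columns of the `d × kℓ` matrix are indexed by `Fin (k*ℓ)`, the cell `(i,j)` of the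
`k × ℓ` grid corresponding to the index `j*k + i`, so the grid-column of `c` is `c / k`). -/
def twoMinorsSet (K : Type) [Field K] (d k ℓ : ℕ) : Set (MvPolynomial (Fin d × Fin (k * ℓ)) K) :=
  {f | ∃ (A : Finset (Fin d)) (B : Finset (Fin (k * ℓ)))
        (hA : A.card = 2) (hB : B.card = 2) (j : Fin ℓ),
        (∀ c ∈ B, c.val / k = j.val) ∧ f = paperMinor K d (k * ℓ) 2 A B hA hB}

/-- All `ℓ`-minors of the full matrix `P`. -/
def fullEllMinorsSet (K : Type) [Field K] (d k ℓ : ℕ) :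
    Set (MvPolynomial (Fin d × Fin (k * ℓ)) K) :=
  {f | ∃ (A : Finset (Fin d)) (B : Finset (Fin (k * ℓ)))
        (hA : A.card = ℓ) (hB : B.card = ℓ), f = paperMinor K d (k * ℓ) ℓ A B hA hB}

/-- The `ℓ`-minors `[A|B]` with `|B ∩ C j| ≤ 1` for every grid-column `C j`. -/
def sparseEllMinorsSet (K : Type) [Field K] (d k ℓ : ℕ) :
    Set (MvPolynomial (Fin d × Fin (k * ℓ)) K) :=
  {f | ∃ (A : Finset (Fin d)) (B : Finset (Fin (k * ℓ)))
        (hA : A.card = ℓ) (hB : B.card = ℓ),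
        (∀ j : Fin ℓ, (B.filter (fun c => c.val / k = j.val)).card ≤ 1) ∧
        f = paperMinor K d (k * ℓ) ℓ A B hA hB}

namespace I0Aux
variable {K : Type} [Field K] {d n : ℕ}

/-- row degree of a monomial -/
def rdeg (μ : (Fin d × Fin n) →₀ ℕ) (a : Fin d) : ℕ := ∑ b, μ (a, b)
/-- column degree of a monomial -/
def cdeg (μ : (Fin d × Fin n) →₀ ℕ) (b : Fin n) : ℕ := ∑ a, μ (a, b)

lemma rdeg_add (μ1 μ2 : (Fin d × Fin n) →₀ ℕ) (a : Fin d) :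
    rdeg (μ1 + μ2) a = rdeg μ1 a + rdeg μ2 a := by
  simp [rdeg, Finset.sum_add_distrib]

lemma cdeg_add (μ1 μ2 : (Fin d × Fin n) →₀ ℕ) (b : Fin n) :
    cdeg (μ1 + μ2) b = cdeg μ1 b + cdeg μ2 b := by
  simp [cdeg, Finset.sum_add_distrib]

lemma prod_X_eq {σ : Type*} {m : ℕ} (f : Fin m → σ) :
    (∏ i, (X (f i) : MvPolynomial σ K)) = monomial (∑ i, Finsupp.single (f i) 1) 1 := by
  induction m with
  | zero => simp [MvPolynomial.monomial_zero']
  | succ m ih =>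
    rw [Fin.prod_univ_succ, Fin.sum_univ_succ, ih fun i => f i.succ]
    rw [show (X (f 0) : MvPolynomial σ K) = monomial (Finsupp.single (f 0) 1) 1 from rfl,
      monomial_mul, mul_one]

lemma rdeg_sum_single {m : ℕ} (f : Fin m → Fin d) (g : Fin m → Fin n) (a : Fin d) :
    rdeg (∑ i, Finsupp.single (f i, g i) 1) a = ∑ i, if f i = a then 1 else 0 := by
  unfold rdeg
  simp only [Finsupp.finset_sum_apply, Finsupp.single_apply, Prod.mk.injEq, ite_and]
  rw [Finset.sum_comm]
  refine Finset.sum_congr rfl fun i _ => ?_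
  by_cases h : f i = a <;> simp [h]

lemma cdeg_sum_single {m : ℕ} (f : Fin m → Fin d) (g : Fin m → Fin n) (b : Fin n) :
    cdeg (∑ i, Finsupp.single (f i, g i) 1) b = ∑ i, if g i = b then 1 else 0 := by
  unfold cdeg
  simp only [Finsupp.finset_sum_apply, Finsupp.single_apply, Prod.mk.injEq, ite_and]
  rw [Finset.sum_comm]
  refine Finset.sum_congr rfl fun i _ => ?_
  by_cases h2 : g i = b <;> simp [h2]

lemma sum_ite_orderEmbOfFin {m : ℕ} {e : ℕ} (A : Finset (Fin e)) (hA : A.card = m) (a : Fin e) :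
    (∑ i : Fin m, if A.orderEmbOfFin hA i = a then 1 else 0) = if a ∈ A then 1 else 0 := by
  by_cases h : a ∈ A
  · have : a ∈ Set.range (A.orderEmbOfFin hA) := by
      rw [Finset.range_orderEmbOfFin]; exact h
    obtain ⟨i0, hi0⟩ := this
    rw [if_pos h]
    have : ∀ i : Fin m, (A.orderEmbOfFin hA i = a) ↔ i = i0 := by
      intro i
      constructor
      · intro hi; exact (A.orderEmbOfFin hA).injective (hi.trans hi0.symm)
      · rintro rfl; exact hi0
    simp only [this]
    simp
  · rw [if_neg h]
    apply Finset.sum_eq_zero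
    intro i _
    rw [if_neg]
    intro hi
    exact h (hi ▸ Finset.orderEmbOfFin_mem A hA i)


lemma minor_homog {m : ℕ} (A : Finset (Fin d)) (B : Finset (Fin n))
    (hA : A.card = m) (hB : B.card = m) (μ : (Fin d × Fin n) →₀ ℕ)
    (hμ : coeff μ (paperMinor K d n m A B hA hB) ≠ 0) :
    (∀ a, rdeg μ a = if a ∈ A then 1 else 0) ∧ (∀ b, cdeg μ b = if b ∈ B then 1 else 0) := by
  rw [paperMinor, Matrix.det_apply'] at hμ
  rw [coeff_sum] at hμ
  obtain ⟨σ, -, hσ⟩ := Finset.exists_ne_zero_of_sum_ne_zero hμ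
  have h1 : coeff μ (∏ i, (X (A.orderEmbOfFin hA (σ i), B.orderEmbOfFin hB i)
      : MvPolynomial (Fin d × Fin n) K)) ≠ 0 := by
    intro h0
    apply hσ
    rw [show ((Equiv.Perm.sign σ : ℤ) : MvPolynomial (Fin d × Fin n) K) *
        ∏ i, (Matrix.of fun a b : Fin m =>
          (X (A.orderEmbOfFin hA a, B.orderEmbOfFin hB b) : MvPolynomial (Fin d × Fin n) K)) (σ i) i
        = (Equiv.Perm.sign σ : ℤ) • ∏ i, (X (A.orderEmbOfFin hA (σ i), B.orderEmbOfFin hB i)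
          : MvPolynomial (Fin d × Fin n) K) from (zsmul_eq_mul _ _).symm]
    rw [coeff_smul, h0, smul_zero]
  rw [prod_X_eq] at h1
  rw [coeff_monomial] at h1
  have hμeq : μ = ∑ i, Finsupp.single (A.orderEmbOfFin hA (σ i), B.orderEmbOfFin hB i) 1 := by
    by_contra hne
    exact h1 (if_neg fun h => hne h.symm)
  subst hμeq
  constructor
  · intro a
    rw [rdeg_sum_single]
    rw [show (∑ i, if A.orderEmbOfFin hA (σ i) = a then 1 else 0)
        = ∑ i, if A.orderEmbOfFin hA i = a then 1 else 0 from
      Equiv.sum_comp σ (fun i => if A.orderEmbOfFin hA i = a then 1 else 0)]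
    exact sum_ite_orderEmbOfFin A hA a
  · intro b
    rw [cdeg_sum_single]
    exact sum_ite_orderEmbOfFin B hB b


lemma minor_ne_zero {m : ℕ} (A : Finset (Fin d)) (B : Finset (Fin n))
    (hA : A.card = m) (hB : B.card = m) :
    paperMinor K d n m A B hA hB ≠ 0 := by
  classical
  set v : Fin d × Fin n → K := fun x =>
    if x ∈ Finset.image (fun i => (A.orderEmbOfFin hA i, B.orderEmbOfFin hB i)) Finset.univ
    then 1 else 0 with hv
  intro h0
  have := congrArg (eval v) h0
  rw [paperMinor, RingHom.map_det, RingHom.mapMatrix_apply, map_zero] at this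
  have hM : (Matrix.of fun a b : Fin m =>
      (X (A.orderEmbOfFin hA a, B.orderEmbOfFin hB b) : MvPolynomial (Fin d × Fin n) K)).map
      (eval v) = 1 := by
    ext i j
    simp only [Matrix.map_apply, Matrix.of_apply, eval_X, hv]
    by_cases hij : i = j
    · subst hij
      rw [if_pos, Matrix.one_apply_eq]
      exact Finset.mem_image_of_mem _ (Finset.mem_univ i)
    · rw [if_neg, Matrix.one_apply_ne hij]
      intro hmem
      obtain ⟨t, -, ht⟩ := Finset.mem_image.mp hmem
      obtain ⟨h1, h2⟩ := Prod.mk.injEq .. ▸ ht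
      exact hij (((A.orderEmbOfFin hA).injective h1).symm.trans
        ((B.orderEmbOfFin hB).injective h2))
  rw [hM, Matrix.det_one] at this
  exact one_ne_zero this

lemma coeff_mul_minor_eq_zero {m' : ℕ} {A A' : Finset (Fin d)} {B B' : Finset (Fin n)}
    {hA' : A'.card = m'} {hB' : B'.card = m'} (f : MvPolynomial (Fin d × Fin n) K)
    (hnot : ¬ (A' ⊆ A ∧ B' ⊆ B)) (μ : (Fin d × Fin n) →₀ ℕ)
    (hr : ∀ a, rdeg μ a = if a ∈ A then 1 else 0)
    (hc : ∀ b, cdeg μ b = if b ∈ B then 1 else 0) :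
    coeff μ (f * paperMinor K d n m' A' B' hA' hB') = 0 := by
  rw [coeff_mul]
  apply Finset.sum_eq_zero
  rintro ⟨μ1, μ2⟩ hmem
  rw [Finset.HasAntidiagonal.mem_antidiagonal] at hmem
  by_cases h2 : coeff μ2 (paperMinor K d n m' A' B' hA' hB') = 0
  · rw [h2, mul_zero]
  exfalso
  obtain ⟨hr2, hc2⟩ := minor_homog A' B' hA' hB' μ2 h2
  apply hnot
  constructor
  · intro a ha
    have h1 : rdeg μ2 a = 1 := by rw [hr2 a, if_pos ha]
    have := hr a
    rw [← hmem, rdeg_add, h1] at this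
    by_contra haA
    rw [if_neg haA] at this
    omega
  · intro b hb
    have h1 : cdeg μ2 b = 1 := by rw [hc2 b, if_pos hb]
    have := hc b
    rw [← hmem, cdeg_add, h1] at this
    by_contra hbB
    rw [if_neg hbB] at this
    omega

lemma not_mem_span_of_blocking {m0 : ℕ} {T : Set (MvPolynomial (Fin d × Fin n) K)}
    (A : Finset (Fin d)) (B : Finset (Fin n)) (hA : A.card = m0) (hB : B.card = m0)
    (hT : ∀ s ∈ T, ∃ (m' : ℕ) (A' : Finset (Fin d)) (B' : Finset (Fin n))
      (hA' : A'.card = m') (hB' : B'.card = m'),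
      s = paperMinor K d n m' A' B' hA' hB' ∧ ¬ (A' ⊆ A ∧ B' ⊆ B)) :
    paperMinor K d n m0 A B hA hB ∉ Ideal.span T := by
  intro hmem
  rw [Ideal.span, Submodule.mem_span_set] at hmem
  obtain ⟨c, hc, hsum⟩ := hmem
  obtain ⟨μ, hμ⟩ := MvPolynomial.ne_zero_iff.mp (minor_ne_zero (K := K) A B hA hB)
  obtain ⟨hr, hcd⟩ := minor_homog A B hA hB μ hμ
  apply hμ
  rw [← hsum, Finsupp.sum, coeff_sum]
  apply Finset.sum_eq_zero
  intro s hs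
  obtain ⟨m', A', B', hA', hB', rfl, hnot⟩ := hT s (hc hs)
  rw [smul_eq_mul]
  exact coeff_mul_minor_eq_zero (c _) hnot μ hr hcd


lemma orderEmbOfFin_erase {e m : ℕ} (A : Finset (Fin e)) (hA : A.card = m + 1) (i : Fin (m + 1))
    (hA' : (A.erase (A.orderEmbOfFin hA i)).card = m) (x : Fin m) :
    (A.erase (A.orderEmbOfFin hA i)).orderEmbOfFin hA' x = A.orderEmbOfFin hA (i.succAbove x) := by
  have h := Finset.orderEmbOfFin_unique hA'
    (f := fun x => A.orderEmbOfFin hA (i.succAbove x)) ?_ ?_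
  · exact (congrFun h x).symm
  · intro y
    rw [Finset.mem_erase]
    exact ⟨fun h => (Fin.succAbove_ne i y) ((A.orderEmbOfFin hA).injective h),
      Finset.orderEmbOfFin_mem _ _ _⟩
  · exact (A.orderEmbOfFin hA).strictMono.comp (Fin.strictMono_succAbove i)

lemma minor_mem_two (K : Type) [Field K] (d k ℓ : ℕ) (hk : 0 < k) :
    ∀ (m : ℕ) (A : Finset (Fin d)) (B : Finset (Fin (k * ℓ)))
      (hA : A.card = m) (hB : B.card = m) (b1 b2 : Fin (k * ℓ)),
      b1 ∈ B → b2 ∈ B → b1 ≠ b2 → b1.val / k = b2.val / k →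
      paperMinor K d (k * ℓ) m A B hA hB ∈ Ideal.span (twoMinorsSet K d k ℓ) := by
  intro m
  induction m with
  | zero =>
    intro A B hA hB b1 b2 hb1 hb2 hne _
    exfalso
    have : 0 < B.card := Finset.card_pos.mpr ⟨b1, hb1⟩
    omega
  | succ m ih =>
    intro A B hA hB b1 b2 hb1 hb2 hne hcol
    by_cases hm : m = 1
    · -- base case : this is a 2-minor
      subst hm
      apply Ideal.subset_span
      refine ⟨A, B, hA, hB, ⟨b1.val / k, ?_⟩, ?_, rfl⟩
      · rw [Nat.div_lt_iff_lt_mul hk]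
        calc (b1 : ℕ) < k * ℓ := b1.isLt
        _ = ℓ * k := mul_comm _ _
      · -- every c ∈ B has c / k = b1 / k
        have hBeq : B = {b1, b2} := by
          apply (Finset.eq_of_subset_of_card_le _ _).symm
          · intro c hc
            simp only [Finset.mem_insert, Finset.mem_singleton] at hc
            rcases hc with rfl | rfl
            · exact hb1
            · exact hb2
          · rw [hB, Finset.card_insert_of_notMem (by simpa using hne),
              Finset.card_singleton]
        intro c hc
        rw [hBeq] at hc
        simp only [Finset.mem_insert, Finset.mem_singleton] at hc
        rcases hc with rfl | rfl
        · rfl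
        · exact hcol.symm
    · -- inductive step : m + 1 ≥ 3
      have hm2 : 2 ≤ m := by
        rcases Nat.lt_or_ge m 2 with h | h
        · interval_cases m
          · exfalso
            have : ({b1, b2} : Finset _).card ≤ B.card := by
              apply Finset.card_le_card
              intro c hc
              simp only [Finset.mem_insert, Finset.mem_singleton] at hc
              rcases hc with rfl | rfl
              · exact hb1
              · exact hb2
            rw [hB, Finset.card_insert_of_notMem (by simpa using hne),
              Finset.card_singleton] at this
            omega
          · exact absurd rfl hm
        · exact h
      -- find indices of b1 b2 and a column index avoiding them
      have hr := Finset.range_orderEmbOfFin B hB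
      obtain ⟨i1, hi1⟩ : ∃ i, B.orderEmbOfFin hB i = b1 := by
        have : b1 ∈ Set.range (B.orderEmbOfFin hB) := hr ▸ hb1
        exact this
      obtain ⟨i2, hi2⟩ : ∃ i, B.orderEmbOfFin hB i = b2 := by
        have : b2 ∈ Set.range (B.orderEmbOfFin hB) := hr ▸ hb2
        exact this
      obtain ⟨j0, hj01, hj02⟩ : ∃ j0 : Fin (m + 1), j0 ≠ i1 ∧ j0 ≠ i2 := by
        have h1 : ({i1, i2} : Finset (Fin (m + 1))).card ≤ 2 :=
          (Finset.card_insert_le _ _).trans (by simp)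
        have h2 := Finset.le_card_sdiff ({i1, i2} : Finset (Fin (m + 1))) Finset.univ
        rw [Finset.card_univ, Fintype.card_fin] at h2
        have h3 : 0 < ((Finset.univ : Finset (Fin (m + 1))) \ {i1, i2}).card := by omega
        obtain ⟨j0, hj0⟩ := Finset.card_pos.mp h3
        rw [Finset.mem_sdiff, Finset.mem_insert, Finset.mem_singleton] at hj0
        exact ⟨j0, fun h => hj0.2 (Or.inl h), fun h => hj0.2 (Or.inr h)⟩
      have hB' : (B.erase (B.orderEmbOfFin hB j0)).card = m := by
        rw [Finset.card_erase_of_mem (Finset.orderEmbOfFin_mem _ _ _), hB]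
        omega
      rw [paperMinor, Matrix.det_succ_column _ j0]
      apply Ideal.sum_mem
      intro i _
      have hAi : (A.erase (A.orderEmbOfFin hA i)).card = m := by
        rw [Finset.card_erase_of_mem (Finset.orderEmbOfFin_mem _ _ _), hA]
        omega
      have hsub : ((Matrix.of fun a b : Fin (m + 1) =>
          (X (A.orderEmbOfFin hA a, B.orderEmbOfFin hB b)
            : MvPolynomial (Fin d × Fin (k * ℓ)) K)).submatrix i.succAbove j0.succAbove)
          = Matrix.of fun a b : Fin m =>
            (X ((A.erase (A.orderEmbOfFin hA i)).orderEmbOfFin hAi a,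
              (B.erase (B.orderEmbOfFin hB j0)).orderEmbOfFin hB' b)
              : MvPolynomial (Fin d × Fin (k * ℓ)) K) := by
        ext a b
        simp only [Matrix.submatrix_apply, Matrix.of_apply,
          orderEmbOfFin_erase A hA i hAi a, orderEmbOfFin_erase B hB j0 hB' b]
      rw [hsub]
      apply Ideal.mul_mem_left
      have hb1' : b1 ∈ B.erase (B.orderEmbOfFin hB j0) := by
        rw [Finset.mem_erase]
        refine ⟨fun h => hj01 ?_, hb1⟩
        exact ((B.orderEmbOfFin hB).injective (hi1.trans h)).symm
      have hb2' : b2 ∈ B.erase (B.orderEmbOfFin hB j0) := by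
        rw [Finset.mem_erase]
        refine ⟨fun h => hj02 ?_, hb2⟩
        exact ((B.orderEmbOfFin hB).injective (hi2.trans h)).symm
      exact ih (A.erase (A.orderEmbOfFin hA i)) (B.erase (B.orderEmbOfFin hB j0))
        hAi hB' b1 b2 hb1' hb2' hne hcol

end I0Aux

/-- The ideal `I₀`, generated by all `2`-minors with columns inside a single grid-column
together with all `ℓ`-minors of `P`, is minimally generated by those `2`-minors together
with the `ℓ`-minors `[A|B]` satisfying `|B ∩ C j| ≤ 1` for every `j`. -/
theorem I0_minimally_generated (K : Type) [Field K] (d k ℓ : ℕ)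
    (h2 : 2 ≤ k) (hkl : k ≤ ℓ) (hld : ℓ ≤ d) :
    Ideal.span (twoMinorsSet K d k ℓ ∪ sparseEllMinorsSet K d k ℓ)
      = Ideal.span (twoMinorsSet K d k ℓ ∪ fullEllMinorsSet K d k ℓ) ∧
    ∀ g ∈ twoMinorsSet K d k ℓ ∪ sparseEllMinorsSet K d k ℓ,
      g ∉ Ideal.span ((twoMinorsSet K d k ℓ ∪ sparseEllMinorsSet K d k ℓ) \ {g}) := by
  have hk : 0 < k := by omega
  constructor
  · apply le_antisymm
    · apply Ideal.span_mono
      rintro f (h | h)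
      · exact Or.inl h
      · obtain ⟨A, B, hA, hB, -, hf⟩ := h
        exact Or.inr ⟨A, B, hA, hB, hf⟩
    · rw [Ideal.span_le]
      rintro f (h | h)
      · exact Ideal.subset_span (Or.inl h)
      · obtain ⟨A, B, hA, hB, rfl⟩ := h
        by_cases hs : ∀ j : Fin ℓ, (B.filter (fun c => c.val / k = j.val)).card ≤ 1
        · exact Ideal.subset_span (Or.inr ⟨A, B, hA, hB, hs, rfl⟩)
        · push_neg at hs
          obtain ⟨j, hj⟩ := hs
          obtain ⟨b1, hb1, b2, hb2, hne⟩ := Finset.one_lt_card.mp hj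
          have hb1B := (Finset.mem_filter.mp hb1).1
          have hb2B := (Finset.mem_filter.mp hb2).1
          have hcol : b1.val / k = b2.val / k :=
            (Finset.mem_filter.mp hb1).2.trans (Finset.mem_filter.mp hb2).2.symm
          have hspan := I0Aux.minor_mem_two K d k ℓ hk ℓ A B hA hB b1 b2 hb1B hb2B hne hcol
          exact Ideal.span_mono Set.subset_union_left hspan
  · rintro g (hg | hg) hmem
    · obtain ⟨A, B, hA, hB, j, hjB, rfl⟩ := hg
      refine I0Aux.not_mem_span_of_blocking A B hA hB ?_ hmem
      rintro s ⟨hsT, hsne⟩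
      rw [Set.mem_singleton_iff] at hsne
      rcases hsT with ⟨A', B', hA', hB', j', hj', rfl⟩ | ⟨A', B', hA', hB', hsp', rfl⟩
      · refine ⟨2, A', B', hA', hB', rfl, ?_⟩
        rintro ⟨hAs, hBs⟩
        have hAeq : A' = A := Finset.eq_of_subset_of_card_le hAs (by rw [hA, hA'])
        have hBeq : B' = B := Finset.eq_of_subset_of_card_le hBs (by rw [hB, hB'])
        subst hAeq hBeq
        exact hsne rfl
      · refine ⟨ℓ, A', B', hA', hB', rfl, ?_⟩
        rintro ⟨hAs, hBs⟩
        have hle : ℓ ≤ 2 := by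
          have := Finset.card_le_card hAs
          rw [hA, hA'] at this
          exact this
        have hl2 : ℓ = 2 := le_antisymm hle (h2.trans hkl)
        have hAeq : A' = A := Finset.eq_of_subset_of_card_le hAs (by rw [hA, hA']; omega)
        have hBeq : B' = B := Finset.eq_of_subset_of_card_le hBs (by rw [hB, hB']; omega)
        subst hAeq hBeq
        have hfil : B'.filter (fun c => c.val / k = j.val) = B' :=
          Finset.filter_true_of_mem (fun c hc => hjB c hc)
        have := hsp' j
        rw [hfil, hB'] at this
        omega
    · obtain ⟨A, B, hA, hB, hsp, rfl⟩ := hg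
      refine I0Aux.not_mem_span_of_blocking A B hA hB ?_ hmem
      rintro s ⟨hsT, hsne⟩
      rw [Set.mem_singleton_iff] at hsne
      rcases hsT with ⟨A', B', hA', hB', j', hj', rfl⟩ | ⟨A', B', hA', hB', hsp', rfl⟩
      · refine ⟨2, A', B', hA', hB', rfl, ?_⟩
        rintro ⟨hAs, hBs⟩
        have hsub : B' ⊆ B.filter (fun c => c.val / k = j'.val) := by
          intro c hc
          exact Finset.mem_filter.mpr ⟨hBs hc, hj' c hc⟩
        have := Finset.card_le_card hsub
        rw [hB'] at this
        have := hsp j'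
        omega
      · refine ⟨ℓ, A', B', hA', hB', rfl, ?_⟩
        rintro ⟨hAs, hBs⟩
        have hAeq : A' = A := Finset.eq_of_subset_of_card_le hAs (by rw [hA, hA'])
        have hBeq : B' = B := Finset.eq_of_subset_of_card_le hBs (by rw [hB, hB'])
        subst hAeq hBeq
        exact hsne rfl
end

section
/- Let P be an n × (n+1) matrix over a commutative ring and a ∈ [n], b ∈ [n]. Then p_{b,a}·det(P delete column a) − p_{b,a+1}·det(P delete column a+1) = ∑_{i<b} (−1)^{a+i−1}[i,b|a,a+1]·det(P delete row i, columns a and a+1) + ∑_{i>b} (−1)^{a+i}[b,i|a,a+1]·det(P delete row i, columns a and a+1). -/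
/-- The strictly increasing enumeration of the complement of a set `s` of indices,
used to delete the rows/columns in `s` from a matrix (junk value if the sizes
do not match). -/
noncomputable def delEmb {N n : ℕ} [NeZero N] (s : Finset (Fin N)) : Fin n → Fin N :=
  if h : sᶜ.card = n then (fun x => sᶜ.orderEmbOfFin h x) else fun _ => 0

lemma delEmb_singleton {N : ℕ} (a : Fin (N + 1)) :
    (delEmb {a} : Fin N → Fin (N + 1)) = a.succAbove := by
  have h : ({a} : Finset (Fin (N + 1)))ᶜ.card = N := by
    simp [Finset.card_compl]
  rw [delEmb, dif_pos h]
  exact (Finset.orderEmbOfFin_unique h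
    (fun x => by simp [Fin.succAbove_ne]) (Fin.strictMono_succAbove a)).symm

lemma delEmb_pair {N : ℕ} (a a1 : Fin (N + 2)) (hne : a ≠ a1) (f : Fin N → Fin (N + 2))
    (hf : StrictMono f) (hfa : ∀ x, f x ≠ a) (hfa1 : ∀ x, f x ≠ a1) :
    (delEmb {a, a1} : Fin N → Fin (N + 2)) = f := by
  have h : ({a, a1} : Finset (Fin (N + 2)))ᶜ.card = N := by
    rw [Finset.card_compl, Finset.card_pair hne]
    simp
  rw [delEmb, dif_pos h]
  exact (Finset.orderEmbOfFin_unique h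
    (fun x => by simp [hfa x, hfa1 x]) hf).symm

/-- Identity (2): for an `(n+1) × (n+2)` matrix `P` over a commutative ring, a row `b` and
columns `a, a+1`,
`p_{b,a}·det(P del col a) − p_{b,a+1}·det(P del col a+1)`
equals
`∑_{i<b} (−1)^{a+i−1}[i,b|a,a+1]·det(P del row i, cols a,a+1)
  + ∑_{i>b} (−1)^{a+i}[b,i|a,a+1]·det(P del row i, cols a,a+1)`
(sign exponents written in terms of the `0`-based indices `a.val`, `i.val`). -/
theorem det_two_column_identity_rect (R : Type) [CommRing R] (n : ℕ)
    (P : Matrix (Fin (n + 1)) (Fin (n + 2)) R)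
    (a : Fin (n + 2)) (b : Fin (n + 1)) (ha : a.val + 1 < n + 2) :
    P b a * (P.submatrix id (delEmb {a} : Fin (n + 1) → Fin (n + 2))).det
      - P b ⟨a.val + 1, ha⟩ *
        (P.submatrix id (delEmb {⟨a.val + 1, ha⟩} : Fin (n + 1) → Fin (n + 2))).det
    = (∑ i ∈ Finset.univ.filter (fun i : Fin (n + 1) => i < b),
        (-1 : R) ^ (a.val + i.val + 1)
          * (P i a * P b ⟨a.val + 1, ha⟩ - P i ⟨a.val + 1, ha⟩ * P b a)
          * (P.submatrix (delEmb {i} : Fin n → Fin (n + 1))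
              (delEmb {a, ⟨a.val + 1, ha⟩} : Fin n → Fin (n + 2))).det)
      + ∑ i ∈ Finset.univ.filter (fun i : Fin (n + 1) => b < i),
        (-1 : R) ^ (a.val + i.val)
          * (P b a * P i ⟨a.val + 1, ha⟩ - P b ⟨a.val + 1, ha⟩ * P i a)
          * (P.submatrix (delEmb {i} : Fin n → Fin (n + 1))
              (delEmb {a, ⟨a.val + 1, ha⟩} : Fin n → Fin (n + 2))).det := by
  set a1 : Fin (n + 2) := ⟨a.val + 1, ha⟩ with ha1
  set a' : Fin (n + 1) := ⟨a.val, by omega⟩ with ha'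
  have hne : a ≠ a1 := by
    simp [ha1, Fin.ext_iff]
  have hsa : a.succAbove a' = a1 := by
    rw [Fin.succAbove_of_le_castSucc _ _ (by simp [Fin.le_def, ha'])]
    simp [Fin.ext_iff, ha', ha1]
  have hsb : a1.succAbove a' = a := by
    rw [Fin.succAbove_of_castSucc_lt _ _ (by simp [Fin.lt_def, ha', ha1])]
    simp [Fin.ext_iff, ha']
  have hcolA : (delEmb {a, a1} : Fin n → Fin (n + 2)) = a.succAbove ∘ a'.succAbove := by
    refine delEmb_pair a a1 hne _
      ((Fin.strictMono_succAbove a).comp (Fin.strictMono_succAbove a'))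
      (fun x => Fin.succAbove_ne a _) (fun x hx => ?_)
    exact Fin.succAbove_ne a' x (Fin.succAbove_right_injective (hx.trans hsa.symm))
  have hcolB : (delEmb {a, a1} : Fin n → Fin (n + 2)) = a1.succAbove ∘ a'.succAbove := by
    refine delEmb_pair a a1 hne _
      ((Fin.strictMono_succAbove a1).comp (Fin.strictMono_succAbove a'))
      (fun x hx => ?_) (fun x => Fin.succAbove_ne a1 _)
    exact Fin.succAbove_ne a' x (Fin.succAbove_right_injective (hx.trans hsb.symm))
  set M : Fin (n + 1) → R := fun i =>
    (P.submatrix (delEmb {i} : Fin n → Fin (n + 1))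
      (delEmb {a, a1} : Fin n → Fin (n + 2))).det with hM
  have hA : (P.submatrix id (delEmb {a} : Fin (n + 1) → Fin (n + 2))).det
      = ∑ i : Fin (n + 1), (-1 : R) ^ (i.val + a.val) * P i a1 * M i := by
    rw [delEmb_singleton, Matrix.det_succ_column _ a']
    refine Finset.sum_congr rfl fun i _ => ?_
    simp only [hM, Matrix.submatrix_apply, Matrix.submatrix_submatrix, Function.id_comp, id_eq,
      hsa, hcolA, delEmb_singleton, ha']
    rw [← ha', hsa]
  have hB : (P.submatrix id (delEmb {a1} : Fin (n + 1) → Fin (n + 2))).det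
      = ∑ i : Fin (n + 1), (-1 : R) ^ (i.val + a.val) * P i a * M i := by
    rw [delEmb_singleton, Matrix.det_succ_column _ a']
    refine Finset.sum_congr rfl fun i _ => ?_
    simp only [hM, Matrix.submatrix_apply, Matrix.submatrix_submatrix, Function.id_comp, id_eq,
      hsb, hcolB, delEmb_singleton, ha']
    rw [← ha', hsb]
  set g : Fin (n + 1) → R := fun i =>
    (-1 : R) ^ (a.val + i.val) * (P b a * P i a1 - P b a1 * P i a) * M i with hg
  have hgb : g b = 0 := by simp only [hg]; ring
  have hLHS : P b a * (P.submatrix id (delEmb {a} : Fin (n + 1) → Fin (n + 2))).det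
      - P b a1 * (P.submatrix id (delEmb {a1} : Fin (n + 1) → Fin (n + 2))).det
      = ∑ i : Fin (n + 1), g i := by
    rw [hA, hB, Finset.mul_sum, Finset.mul_sum, ← Finset.sum_sub_distrib]
    refine Finset.sum_congr rfl fun i _ => ?_
    simp only [hg]
    rw [Nat.add_comm a.val i.val]
    ring
  rw [hLHS]
  have h1 : ∑ i ∈ Finset.univ.filter (fun i : Fin (n + 1) => i < b),
      (-1 : R) ^ (a.val + i.val + 1) * (P i a * P b a1 - P i a1 * P b a) * M i
      = ∑ i ∈ Finset.univ.filter (fun i : Fin (n + 1) => i < b), g i := by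
    refine Finset.sum_congr rfl fun i _ => ?_
    simp only [hg, pow_succ]
    ring
  have h2 : ∑ i ∈ Finset.univ.filter (fun i : Fin (n + 1) => b < i), g i
      = ∑ i ∈ Finset.univ.filter (fun i : Fin (n + 1) => ¬ i < b), g i := by
    refine Finset.sum_subset (fun x hx => ?_) (fun x hx hnx => ?_)
    · simp only [Finset.mem_filter, Finset.mem_univ, true_and] at hx ⊢
      exact not_lt_of_gt hx
    · simp only [Finset.mem_filter, Finset.mem_univ, true_and, not_lt] at hx hnx
      have : x = b := le_antisymm hnx hx
      rw [this, hgb]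
  rw [h1, h2, Finset.sum_filter_add_sum_filter_not]
end

section
/- For S ∈ ℒ, the ideals I_S and I_0 are incomparable: I_S ⊄ I_0 and I_0 ⊄ I_S. Moreover, for distinct S, T ∈ ℒ, I_S ⊄ I_T. -/
open MvPolynomial

/-- The set of (determinants of) `2`-minors of the submatrices `P_{C_j}` of the `d × kℓ`
matrix of indeterminates `P`, whose columns are the cells of a `k × ℓ` grid; `C j` is the
`j`-th grid-column, consisting of the cells `(i, j)` for `i : Fin k`. -/
def colTwoMinors (K : Type) [Field K] (d k ℓ : ℕ) :
    Set (MvPolynomial (Fin d × (Fin k × Fin ℓ)) K) :=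
  {f | ∃ (r₁ r₂ : Fin d) (j : Fin ℓ) (i₁ i₂ : Fin k), r₁ ≠ r₂ ∧ i₁ ≠ i₂ ∧
    f = X (r₁, (i₁, j)) * X (r₂, (i₂, j)) - X (r₁, (i₂, j)) * X (r₂, (i₁, j))}

/-- The set of `ℓ`-minors of the submatrices `P_{R_i}`, where `R i` is the `i`-th grid-row,
consisting of the cells `(i, j)` for `j : Fin ℓ`. -/
def rowEllMinors (K : Type) [Field K] (d k ℓ : ℕ) :
    Set (MvPolynomial (Fin d × (Fin k × Fin ℓ)) K) :=
  {f | ∃ (i : Fin k) (r : Fin ℓ → Fin d), Function.Injective r ∧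
    f = (Matrix.of fun x y : Fin ℓ =>
      (X (r x, (i, y)) : MvPolynomial (Fin d × (Fin k × Fin ℓ)) K)).det}

/-- The set of all `ℓ`-minors of the full matrix `P`. -/
def fullEllMinors (K : Type) [Field K] (d k ℓ : ℕ) :
    Set (MvPolynomial (Fin d × (Fin k × Fin ℓ)) K) :=
  {f | ∃ (r : Fin ℓ → Fin d) (c : Fin ℓ → Fin k × Fin ℓ),
    Function.Injective r ∧ Function.Injective c ∧
    f = (Matrix.of fun x y : Fin ℓ =>
      (X (r x, c y) : MvPolynomial (Fin d × (Fin k × Fin ℓ)) K)).det}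

/-- The determinantal hyperedge ideal `J = J_{[d],Δ^{2,ℓ}}`, generated by all `2`-minors of
the `P_{C_j}` and all `ℓ`-minors of the `P_{R_i}`. -/
noncomputable def idealJ (K : Type) [Field K] (d k ℓ : ℕ) : Ideal (MvPolynomial (Fin d × (Fin k × Fin ℓ)) K) :=
  Ideal.span (colTwoMinors K d k ℓ ∪ rowEllMinors K d k ℓ)

/-- The ideal `I₀`, generated by all `2`-minors of the `P_{C_j}` and all `ℓ`-minors of `P`. -/
noncomputable def idealI0 (K : Type) [Field K] (d k ℓ : ℕ) : Ideal (MvPolynomial (Fin d × (Fin k × Fin ℓ)) K) :=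
  Ideal.span (colTwoMinors K d k ℓ ∪ fullEllMinors K d k ℓ)

/-- The ideal `I_S`, generated by the variables `p_{r,c}` with `c ∈ S` together with all
`2`-minors of the `P_{C_j}`. -/
noncomputable def idealIS (K : Type) [Field K] (d k ℓ : ℕ) (S : Finset (Fin k × Fin ℓ)) :
    Ideal (MvPolynomial (Fin d × (Fin k × Fin ℓ)) K) :=
  Ideal.span ({f | ∃ (r : Fin d) (c : Fin k × Fin ℓ), c ∈ S ∧ f = X (r, c)}
    ∪ colTwoMinors K d k ℓ)

/-- The family `ℒ` of transversals of the grid-rows of the `k × ℓ` grid which meet at least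
two grid-columns. -/
def familyL (k ℓ : ℕ) : Set (Finset (Fin k × Fin ℓ)) :=
  {S | S.card = k ∧ (S.image Prod.fst).card = k ∧ 2 ≤ (S.image Prod.snd).card}

/-- If every generator of `span G` evaluates to zero at a point but some `f ∈ I`
does not, then `I ⊄ span G`. -/
lemma not_le_span_of_eval {σ : Type*} {K : Type} [Field K] (pt : σ → K)
    (I : Ideal (MvPolynomial σ K)) (G : Set (MvPolynomial σ K))
    (f : MvPolynomial σ K) (hf : f ∈ I) (hfe : eval pt f ≠ 0)
    (hG : ∀ g ∈ G, eval pt g = 0) : ¬ I ≤ Ideal.span G := by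
  intro hle
  have hker : Ideal.span G ≤ RingHom.ker (eval pt) := by
    rw [Ideal.span_le]
    intro g hg
    exact RingHom.mem_ker.mpr (hG g hg)
  exact hfe (RingHom.mem_ker.mp (hker (hle hf)))

/-- Each grid-column of the grid misses some cell of a transversal `S ∈ ℒ`. -/
lemma exists_not_mem_col {k ℓ : ℕ} (h2 : 2 ≤ k) {S : Finset (Fin k × Fin ℓ)}
    (hS : S ∈ familyL k ℓ) (j : Fin ℓ) : ∃ i : Fin k, (i, j) ∉ S := by
  obtain ⟨hcard, _, hsnd⟩ := hS
  by_contra h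
  push_neg at h
  have hk : 0 < k := lt_of_lt_of_le two_pos h2
  have hsub : (Finset.univ.image fun i : Fin k => (i, j)) ⊆ S := by
    intro x hx
    simp only [Finset.mem_image, Finset.mem_univ, true_and] at hx
    obtain ⟨i, rfl⟩ := hx
    exact h i
  have hcard2 : (Finset.univ.image fun i : Fin k => (i, j)).card = k := by
    rw [Finset.card_image_of_injective _ (fun a b hab => by simpa using hab)]
    simp
  have hEq : S = Finset.univ.image fun i : Fin k => (i, j) :=
    (Finset.eq_of_subset_of_card_le hsub (by rw [hcard2, hcard])).symm
  have : S.image Prod.snd = {j} := by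
    rw [hEq, Finset.image_image]
    apply Finset.eq_singleton_iff_nonempty_unique_mem.mpr
    constructor
    · exact ⟨j, Finset.mem_image.mpr ⟨⟨0, hk⟩, Finset.mem_univ _, rfl⟩⟩
    · intro y hy
      simp only [Finset.mem_image, Finset.mem_univ, true_and, Function.comp] at hy
      obtain ⟨i, rfl⟩ := hy
      rfl
  rw [this] at hsnd
  simp at hsnd

/-- For `S ∈ ℒ` the ideals `I_S` and `I₀` are incomparable, and for distinct `S, T ∈ ℒ`
one has `I_S ⊄ I_T`. -/
theorem ideals_incomparable (K : Type) [Field K] (d k ℓ : ℕ)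
    (h2 : 2 ≤ k) (hkl : k ≤ ℓ) (hld : ℓ ≤ d) :
    (∀ S ∈ familyL k ℓ,
        ¬ idealIS K d k ℓ S ≤ idealI0 K d k ℓ ∧ ¬ idealI0 K d k ℓ ≤ idealIS K d k ℓ S) ∧
    (∀ S ∈ familyL k ℓ, ∀ T ∈ familyL k ℓ, S ≠ T →
        ¬ idealIS K d k ℓ S ≤ idealIS K d k ℓ T) := by
  have hl2 : 2 ≤ ℓ := le_trans h2 hkl
  have hd2 : 2 ≤ d := le_trans hl2 hld
  have hd0 : 0 < d := lt_of_lt_of_le two_pos hd2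
  constructor
  · intro S hS
    obtain ⟨hcard, hfst, hsnd⟩ := hS
    constructor
    · -- I_S ⊄ I_0 : evaluate everything at the all-ones point
      have hSne : S.Nonempty := Finset.card_pos.mp (by omega)
      obtain ⟨c, hc⟩ := hSne
      refine not_le_span_of_eval (fun _ => (1 : K)) _ _ (X (⟨0, hd0⟩, c))
        (Ideal.subset_span (Or.inl ⟨⟨0, hd0⟩, c, hc, rfl⟩)) (by simp) ?_
      rintro g (⟨r₁, r₂, j, i₁, i₂, _, _, rfl⟩ | ⟨r, cc, _, _, rfl⟩)
      · simp
      · rw [RingHom.map_det]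
        apply Matrix.det_zero_of_row_eq (i := (⟨0, by omega⟩ : Fin ℓ)) (j := ⟨1, by omega⟩)
        · simp [Fin.ext_iff]
        · funext y; simp [Matrix.map_apply]
    · -- I_0 ⊄ I_S
      choose ii hii using fun j => exists_not_mem_col h2 ⟨hcard, hfst, hsnd⟩ j
      set pt : Fin d × (Fin k × Fin ℓ) → K := fun v =>
        if v.1 = Fin.castLE hld v.2.2 ∧ v.2.1 = ii v.2.2 then 1 else 0 with hpt
      refine not_le_span_of_eval pt _ _
        ((Matrix.of fun x y : Fin ℓ =>
          (X (Fin.castLE hld x, (ii y, y)) : MvPolynomial (Fin d × (Fin k × Fin ℓ)) K)).det)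
        (Ideal.subset_span (Or.inr ⟨Fin.castLE hld, fun y => (ii y, y),
          Fin.castLE_injective hld, fun a b hab => congrArg Prod.snd hab, rfl⟩)) ?_ ?_
      · rw [RingHom.map_det]
        have : (Matrix.of fun x y : Fin ℓ =>
            (X (Fin.castLE hld x, (ii y, y)) : MvPolynomial (Fin d × (Fin k × Fin ℓ)) K)).map
            (eval pt) = 1 := by
          funext x y
          simp only [Matrix.map_apply, Matrix.of_apply, eval_X, hpt]
          by_cases hxy : x = y
          · subst hxy; simp [Matrix.one_apply]
          · rw [if_neg, Matrix.one_apply_ne hxy]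
            rintro ⟨h1, -⟩
            exact hxy (Fin.castLE_injective hld h1)
        rw [RingHom.mapMatrix_apply, this, Matrix.det_one]
        exact one_ne_zero
      · rintro g (⟨r, ⟨i, j⟩, hmem, rfl⟩ | ⟨r₁, r₂, j, i₁, i₂, _, hi12, rfl⟩)
        · simp only [eval_X, hpt]
          rw [if_neg]
          rintro ⟨-, h2'⟩
          exact hii j (h2' ▸ hmem)
        · simp only [map_sub, map_mul, eval_X, hpt]
          have z : ∀ (r : Fin d) (i : Fin k), i ≠ ii j →
              (if r = Fin.castLE hld j ∧ i = ii j then (1 : K) else 0) = 0 :=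
            fun r i hi => if_neg (fun h => hi h.2)
          by_cases h1 : i₁ = ii j
          · have h2' : i₂ ≠ ii j := fun h => hi12 (h1.trans h.symm)
            rw [z r₂ i₂ h2', z r₁ i₂ h2']
            ring
          · rw [z r₁ i₁ h1, z r₂ i₁ h1]
            ring
  · intro S hS T hT hne
    have hcS := hS.1
    have hcT := hT.1
    have hns : ¬ S ⊆ T := fun hsub =>
      hne (Finset.eq_of_subset_of_card_le hsub (by rw [hcS, hcT]))
    obtain ⟨c, hcS', hcT'⟩ := Finset.not_subset.mp hns
    set pt : Fin d × (Fin k × Fin ℓ) → K := fun v => if v.2 ∈ T then 0 else 1 with hpt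
    refine not_le_span_of_eval pt _ _ (X (⟨0, hd0⟩, c))
      (Ideal.subset_span (Or.inl ⟨⟨0, hd0⟩, c, hcS', rfl⟩)) ?_ ?_
    · simp [hpt, hcT']
    · rintro g (⟨r, cc, hmem, rfl⟩ | ⟨r₁, r₂, j, i₁, i₂, _, _, rfl⟩)
      · simp [hpt, hmem]
      · simp only [map_sub, map_mul, eval_X, hpt]
        ring
end
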